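/- Let n be a positive integer, p₁,…,pₙ, q₁,…,qₙ nonnegative reals with ∑pᵢ = ∑qⱼ = 1, and (πᵢⱼ) an n×n nonnegative matrix with ∑ⱼ πᵢⱼ = pᵢ + qᵢ for all i. Let (X,d) be a CAT(0) space, x₁,…,xₙ ∈ X, let z be the barycenter of ∑pᵢδ_{xᵢ}, and for i,j with πᵢⱼ+πⱼᵢ > 0 let zᵢⱼ be the barycenter of (πᵢⱼδ_{xᵢ}+πⱼᵢδ_{xⱼ})/(πᵢⱼ+πⱼᵢ). Then ∑_{i,j: πᵢⱼ+πⱼᵢ>0} πᵢⱼ·d(z, zᵢⱼ)² + (1/2)·∑_{i,j: πᵢⱼ+πⱼᵢ>0} (πᵢⱼπⱼᵢ/(πᵢⱼ+πⱼᵢ))·d(xᵢ,xⱼ)² ≤ ∑ᵢ∑ⱼ pᵢqⱼ·d(xᵢ,xⱼ)². -/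

import Mathlib

lemma ANN_key_real (a b D u v P Q d : ℝ) (ha : 0 ≤ a) (hb : 0 ≤ b) (hs : 0 < a + b)
    (h1 : D + a / (a + b) * u ^ 2 + b / (a + b) * v ^ 2
        ≤ a / (a + b) * P + b / (a + b) * Q)
    (hd0 : 0 ≤ d) (hd : d ≤ u + v) :
    a * D + a * (a * b / (a + b) ^ 2) * d ^ 2
      ≤ a * (a / (a + b) * P) + a * (b / (a + b) * Q) := by
  have hs' : (a + b) ≠ 0 := ne_of_gt hs
  have hd2 : d ^ 2 ≤ (u + v) ^ 2 := by nlinarith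
  have h2 : a * b / (a + b) ^ 2 * d ^ 2 ≤ a / (a + b) * u ^ 2 + b / (a + b) * v ^ 2 := by
    rw [div_mul_eq_mul_div, div_mul_eq_mul_div, div_mul_eq_mul_div, ← add_div,
      div_le_div_iff₀ (by positivity) hs]
    have e1 : a * b * d ^ 2 ≤ a * b * (u + v) ^ 2 :=
      mul_le_mul_of_nonneg_left hd2 (mul_nonneg ha hb)
    nlinarith [sq_nonneg (a * u - b * v), mul_le_mul_of_nonneg_right e1 hs.le]
  calc a * D + a * (a * b / (a + b) ^ 2) * d ^ 2
      = a * (D + a * b / (a + b) ^ 2 * d ^ 2) := by ring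
    _ ≤ a * (a / (a + b) * P + b / (a + b) * Q) :=
        mul_le_mul_of_nonneg_left (by linarith) ha
    _ = a * (a / (a + b) * P) + a * (b / (a + b) * Q) := by ring

lemma ANN_dsum_add {n : ℕ} (f g : Fin n → Fin n → ℝ) :
    ∑ i, ∑ j, (f i j + g i j) = (∑ i, ∑ j, f i j) + (∑ i, ∑ j, g i j) := by
  simp [Finset.sum_add_distrib]

lemma ANN_dsum_comm {n : ℕ} (f : Fin n → Fin n → ℝ) :
    ∑ i, ∑ j, f i j = ∑ i, ∑ j, f j i :=
  Finset.sum_comm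

theorem ANN_inequality_with_barycenters {X : Type*} [MetricSpace X] [CompleteSpace X]
    (hcat : ∀ x y : X, ∀ t ∈ Set.Icc (0 : ℝ) 1, ∃ z : X, ∀ w : X,
      dist w z ^ 2 ≤ (1 - t) * dist w x ^ 2 + t * dist w y ^ 2
        - t * (1 - t) * dist x y ^ 2)
    (n : ℕ) (hn : 0 < n) (p q : Fin n → ℝ) (pi : Fin n → Fin n → ℝ)
    (hp : ∀ i, 0 ≤ p i) (hq : ∀ j, 0 ≤ q j) (hpi : ∀ i j, 0 ≤ pi i j)
    (hps : ∑ i, p i = 1) (hqs : ∑ j, q j = 1)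
    (hrow : ∀ i, ∑ j, pi i j = p i + q i)
    (x : Fin n → X) (z : X)
    (hz : ∀ w : X, dist w z ^ 2 + ∑ i, p i * dist z (x i) ^ 2
      ≤ ∑ i, p i * dist w (x i) ^ 2)
    (zz : Fin n → Fin n → X)
    (hzz : ∀ i j, 0 < pi i j + pi j i → ∀ w : X,
      dist w (zz i j) ^ 2
        + (pi i j / (pi i j + pi j i)) * dist (zz i j) (x i) ^ 2
        + (pi j i / (pi i j + pi j i)) * dist (zz i j) (x j) ^ 2
      ≤ (pi i j / (pi i j + pi j i)) * dist w (x i) ^ 2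
        + (pi j i / (pi i j + pi j i)) * dist w (x j) ^ 2) :
    (∑ i, ∑ j, (if 0 < pi i j + pi j i then pi i j * dist z (zz i j) ^ 2 else 0))
      + (1 / 2) * ∑ i, ∑ j,
          (if 0 < pi i j + pi j i then
            pi i j * pi j i / (pi i j + pi j i) * dist (x i) (x j) ^ 2 else 0)
      ≤ ∑ i, ∑ j, p i * q j * dist (x i) (x j) ^ 2 := by
  classical
  -- abbreviations as functions
  set S : Fin n → Fin n → ℝ := fun i j => pi i j + pi j i with hS
  have hS0 : ∀ i j, ¬ 0 < S i j → pi i j = 0 := by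
    intro i j h
    have h1 := hpi i j; have h2 := hpi j i
    have := not_lt.mp h
    simp only [hS] at this
    linarith
  have hSsymm : ∀ i j, S i j = S j i := fun i j => add_comm _ _
  -- Step 1 : pointwise inequality from hzz at w = z
  have step1 : ∀ i j,
      (if 0 < S i j then pi i j * dist z (zz i j) ^ 2 else 0)
      + (if 0 < S i j then
          pi i j * (pi i j * pi j i / (S i j) ^ 2) * dist (x i) (x j) ^ 2 else 0)
      ≤ (if 0 < S i j then pi i j * (pi i j / S i j * dist z (x i) ^ 2) else 0)
      + (if 0 < S i j then pi i j * (pi j i / S i j * dist z (x j) ^ 2) else 0) := by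
    intro i j
    by_cases h : 0 < S i j
    · simp only [if_pos h]
      have hb := hzz i j h z
      have htri : dist (x i) (x j) ≤ dist (zz i j) (x i) + dist (zz i j) (x j) := by
        have := dist_triangle (x i) (zz i j) (x j)
        rwa [dist_comm (x i) (zz i j)] at this
      exact ANN_key_real (pi i j) (pi j i) _ (dist (zz i j) (x i)) (dist (zz i j) (x j))
        _ _ _ (hpi i j) (hpi j i) h hb dist_nonneg htri
    · simp [h]
  -- sum it up
  have step2 : (∑ i, ∑ j, (if 0 < S i j then pi i j * dist z (zz i j) ^ 2 else 0))
      + (∑ i, ∑ j, (if 0 < S i j then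
          pi i j * (pi i j * pi j i / (S i j) ^ 2) * dist (x i) (x j) ^ 2 else 0))
      ≤ (∑ i, ∑ j, (if 0 < S i j then pi i j * (pi i j / S i j * dist z (x i) ^ 2) else 0))
      + (∑ i, ∑ j, (if 0 < S i j then pi i j * (pi j i / S i j * dist z (x j) ^ 2) else 0)) := by
    rw [← ANN_dsum_add, ← ANN_dsum_add]
    exact Finset.sum_le_sum fun i _ => Finset.sum_le_sum fun j _ => step1 i j
  -- the middle term equals half of the goal's second term
  have hT : (∑ i, ∑ j, (if 0 < S i j then
        pi i j * (pi i j * pi j i / (S i j) ^ 2) * dist (x i) (x j) ^ 2 else 0))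
      = (1 / 2) * ∑ i, ∑ j, (if 0 < S i j then
          pi i j * pi j i / (S i j) * dist (x i) (x j) ^ 2 else 0) := by
    have hsymm := ANN_dsum_comm (fun i j => if 0 < S i j then
        pi i j * (pi i j * pi j i / (S i j) ^ 2) * dist (x i) (x j) ^ 2 else 0)
    rw [eq_comm]
    calc (1 / 2) * ∑ i, ∑ j, (if 0 < S i j then
            pi i j * pi j i / (S i j) * dist (x i) (x j) ^ 2 else 0)
        = (1 / 2) * ∑ i, ∑ j,
            ((if 0 < S i j then
              pi i j * (pi i j * pi j i / (S i j) ^ 2) * dist (x i) (x j) ^ 2 else 0)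
            + (if 0 < S j i then
              pi j i * (pi j i * pi i j / (S j i) ^ 2) * dist (x j) (x i) ^ 2 else 0)) := by
          congr 1
          refine Finset.sum_congr rfl fun i _ => Finset.sum_congr rfl fun j _ => ?_
          by_cases h : 0 < S i j
          · have h' : 0 < S j i := (hSsymm i j) ▸ h
            rw [if_pos h, if_pos h, if_pos h', dist_comm (x j) (x i), hSsymm j i]
            have hne : S i j ≠ 0 := ne_of_gt h
            field_simp
            simp only [hS]
            ring
          · have h' : ¬ 0 < S j i := fun hc => h ((hSsymm i j) ▸ hc)
            rw [if_neg h, if_neg h, if_neg h']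
            ring
      _ = (1 / 2) * ((∑ i, ∑ j, (if 0 < S i j then
              pi i j * (pi i j * pi j i / (S i j) ^ 2) * dist (x i) (x j) ^ 2 else 0))
            + (∑ i, ∑ j, (if 0 < S j i then
              pi j i * (pi j i * pi i j / (S j i) ^ 2) * dist (x j) (x i) ^ 2 else 0))) := by
          rw [ANN_dsum_add]
      _ = ∑ i, ∑ j, (if 0 < S i j then
              pi i j * (pi i j * pi j i / (S i j) ^ 2) * dist (x i) (x j) ^ 2 else 0) := by
          rw [← hsymm]; ring
  -- the RHS of step2 equals ∑ i, (p i + q i) * dist z (x i) ^ 2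
  have hR : (∑ i, ∑ j, (if 0 < S i j then pi i j * (pi i j / S i j * dist z (x i) ^ 2) else 0))
      + (∑ i, ∑ j, (if 0 < S i j then pi i j * (pi j i / S i j * dist z (x j) ^ 2) else 0))
      = ∑ i, (p i + q i) * dist z (x i) ^ 2 := by
    have hswap := ANN_dsum_comm (fun i j =>
      if 0 < S i j then pi i j * (pi j i / S i j * dist z (x j) ^ 2) else 0)
    rw [hswap, ← ANN_dsum_add]
    have hterm : ∀ i j : Fin n,
        (if 0 < S i j then pi i j * (pi i j / S i j * dist z (x i) ^ 2) else 0)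
        + (if 0 < S j i then pi j i * (pi i j / S j i * dist z (x i) ^ 2) else 0)
        = pi i j * dist z (x i) ^ 2 := by
      intro i j
      by_cases h : 0 < S i j
      · have h' : 0 < S j i := (hSsymm i j) ▸ h
        rw [if_pos h, if_pos h', hSsymm j i]
        have hne : S i j ≠ 0 := ne_of_gt h
        field_simp
        simp only [hS]
        ring
      · have h' : ¬ 0 < S j i := fun hc => h ((hSsymm i j) ▸ hc)
        rw [if_neg h, if_neg h', hS0 i j h]
        ring
    calc ∑ i, ∑ j, ((if 0 < S i j then pi i j * (pi i j / S i j * dist z (x i) ^ 2) else 0)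
          + (if 0 < S j i then pi j i * (pi i j / S j i * dist z (x i) ^ 2) else 0))
        = ∑ i, ∑ j, pi i j * dist z (x i) ^ 2 := by
          exact Finset.sum_congr rfl fun i _ => Finset.sum_congr rfl fun j _ => hterm i j
      _ = ∑ i, (p i + q i) * dist z (x i) ^ 2 := by
          refine Finset.sum_congr rfl fun i _ => ?_
          rw [← Finset.sum_mul, hrow i]
  -- final step : ∑ (p i + q i) d(z,x i)^2 ≤ ∑∑ p i q j d(x i, x j)^2
  have hfin : ∑ i, (p i + q i) * dist z (x i) ^ 2
      ≤ ∑ i, ∑ j, p i * q j * dist (x i) (x j) ^ 2 := by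
    have h4 : ∑ j, q j * (dist (x j) z ^ 2 + ∑ i, p i * dist z (x i) ^ 2)
        ≤ ∑ j, q j * (∑ i, p i * dist (x j) (x i) ^ 2) :=
      Finset.sum_le_sum fun j _ => mul_le_mul_of_nonneg_left (hz (x j)) (hq j)
    have hL : ∑ j, q j * (dist (x j) z ^ 2 + ∑ i, p i * dist z (x i) ^ 2)
        = (∑ j, q j * dist z (x j) ^ 2) + ∑ i, p i * dist z (x i) ^ 2 := by
      calc ∑ j, q j * (dist (x j) z ^ 2 + ∑ i, p i * dist z (x i) ^ 2)
          = ∑ j, (q j * dist z (x j) ^ 2 + q j * ∑ i, p i * dist z (x i) ^ 2) :=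
            Finset.sum_congr rfl fun j _ => by rw [dist_comm (x j) z]; ring
        _ = (∑ j, q j * dist z (x j) ^ 2) + ∑ i, p i * dist z (x i) ^ 2 := by
            rw [Finset.sum_add_distrib, ← Finset.sum_mul, hqs, one_mul]
    have hRR : ∑ j, q j * (∑ i, p i * dist (x j) (x i) ^ 2)
        = ∑ i, ∑ j, p i * q j * dist (x i) (x j) ^ 2 := by
      rw [ANN_dsum_comm (fun i j => p i * q j * dist (x i) (x j) ^ 2)]
      refine Finset.sum_congr rfl fun j _ => ?_
      rw [Finset.mul_sum]
      refine Finset.sum_congr rfl fun i _ => ?_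
      rw [dist_comm (x j) (x i)]
      ring
    rw [hL, hRR] at h4
    calc ∑ i, (p i + q i) * dist z (x i) ^ 2
        = (∑ i, q i * dist z (x i) ^ 2) + ∑ i, p i * dist z (x i) ^ 2 := by
          rw [← Finset.sum_add_distrib]
          exact Finset.sum_congr rfl fun i _ => by ring
      _ ≤ _ := h4
  -- assemble
  rw [hT] at step2
  calc (∑ i, ∑ j, (if 0 < S i j then pi i j * dist z (zz i j) ^ 2 else 0))
      + (1 / 2) * ∑ i, ∑ j, (if 0 < S i j then
          pi i j * pi j i / (S i j) * dist (x i) (x j) ^ 2 else 0)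
      ≤ ∑ i, (p i + q i) * dist z (x i) ^ 2 := by rw [← hR]; exact step2
    _ ≤ ∑ i, ∑ j, p i * q j * dist (x i) (x j) ^ 2 := hfin
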